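/- arXiv:2204.01353 — 2 statements merged into one kernel-verified Lean document; each statement's English description precedes it below -/
import Mathlib

section
/- Let Ω be a finite (or countable) sample space with a probability measure, let ω be a random element of Ω, and let X, Y be random functions from Ω to [0,1] (random variables taking values in the space of [0,1]-valued functions on Ω), with X₁, X₂ independent copies of X and Y₁, Y₂ independent copies of Y, all independent of ω. Then E_{X₁,X₂} log(1 − E_ω[X₁(ω)X₂(ω)]) + E_{Y₁,Y₂} log(1 − E_ω[Y₁(ω)Y₂(ω)]) ≤ 2 E_{X,Y} log(1 − E_ω[X(ω)Y(ω)]), provided all the inner expectations E_ω lie in [0,1) almost surely so that the logarithms are defined. -/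
open Real

/-- Moment identity: the mixed `n`-th moment factorizes over replicas. -/
lemma key_moment {Ω A B : Type*} [Fintype Ω] [Fintype A] [Fintype B]
    (μ : Ω → ℝ) (p : A → ℝ) (q : B → ℝ) (X : A → Ω → ℝ) (Y : B → Ω → ℝ) (n : ℕ) :
    ∑ a, ∑ b, p a * q b * (∑ ω, μ ω * (X a ω * Y b ω)) ^ n
      = ∑ w : Fin n → Ω, (∏ i, μ (w i)) *
          ((∑ a, p a * ∏ i, X a (w i)) * (∑ b, q b * ∏ i, Y b (w i))) := by
  have h1 : ∀ (a : A) (b : B), (∑ ω, μ ω * (X a ω * Y b ω)) ^ n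
      = ∑ w : Fin n → Ω, (∏ i, μ (w i)) * ((∏ i, X a (w i)) * (∏ i, Y b (w i))) := by
    intro a b
    rw [Fintype.sum_pow]
    refine Finset.sum_congr rfl fun w _ => ?_
    rw [← Finset.prod_mul_distrib, ← Finset.prod_mul_distrib]
  have e1 : ∀ a : A, (∑ b : B, ∑ w : Fin n → Ω,
      p a * q b * ((∏ i, μ (w i)) * ((∏ i, X a (w i)) * (∏ i, Y b (w i)))))
      = ∑ w : Fin n → Ω, ∑ b : B,
        p a * q b * ((∏ i, μ (w i)) * ((∏ i, X a (w i)) * (∏ i, Y b (w i)))) :=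
    fun a => Finset.sum_comm
  have e2 : (∑ a : A, ∑ w : Fin n → Ω, ∑ b : B,
      p a * q b * ((∏ i, μ (w i)) * ((∏ i, X a (w i)) * (∏ i, Y b (w i)))))
      = ∑ w : Fin n → Ω, ∑ a : A, ∑ b : B,
        p a * q b * ((∏ i, μ (w i)) * ((∏ i, X a (w i)) * (∏ i, Y b (w i)))) :=
    Finset.sum_comm
  conv_lhs => simp only [h1, Finset.mul_sum]
  rw [show (∑ a : A, ∑ b : B, ∑ w : Fin n → Ω,
      p a * q b * ((∏ i, μ (w i)) * ((∏ i, X a (w i)) * (∏ i, Y b (w i)))))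
      = ∑ w : Fin n → Ω, ∑ a : A, ∑ b : B,
        p a * q b * ((∏ i, μ (w i)) * ((∏ i, X a (w i)) * (∏ i, Y b (w i)))) by
    rw [← e2]; exact Finset.sum_congr rfl fun a _ => e1 a]
  refine Finset.sum_congr rfl fun w _ => ?_
  rw [Fintype.sum_mul_sum]
  rw [Finset.mul_sum]
  refine Finset.sum_congr rfl fun a _ => ?_
  rw [Finset.mul_sum]
  exact Finset.sum_congr rfl fun b _ => by ring


/-- Expand a double average of `log (1 - S)` into a power series. -/
lemma log_expand {C D : Type*} [Fintype C] [Fintype D] (p : C → ℝ) (q : D → ℝ)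
    (S : C → D → ℝ) (h0 : ∀ a b, 0 ≤ S a b) (h1 : ∀ a b, S a b < 1) :
    (∑ a, ∑ b, p a * q b * Real.log (1 - S a b))
      = -∑' k : ℕ, ∑ a, ∑ b, p a * q b * (S a b ^ (k + 1) / (k + 1)) := by
  have hlog : ∀ T : ℝ, 0 ≤ T → T < 1 →
      Real.log (1 - T) = -∑' k : ℕ, T ^ (k + 1) / (k + 1) := by
    intro T t0 t1
    have := (Real.hasSum_pow_div_log_of_abs_lt_one
      (by rwa [abs_of_nonneg t0] : |T| < 1)).tsum_eq
    linarith [this]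
  have hsumm : ∀ T : ℝ, 0 ≤ T → T < 1 →
      Summable (fun k : ℕ => T ^ (k + 1) / (k + 1)) :=
    fun T t0 t1 => (Real.hasSum_pow_div_log_of_abs_lt_one
      (by rwa [abs_of_nonneg t0] : |T| < 1)).summable
  have hterm : ∀ (a : C) (b : D), p a * q b * Real.log (1 - S a b)
      = -∑' k : ℕ, p a * q b * (S a b ^ (k + 1) / (k + 1)) := by
    intro a b
    rw [hlog _ (h0 a b) (h1 a b), tsum_mul_left]
    ring
  simp_rw [hterm, Finset.sum_neg_distrib]
  congr 1
  have step1 : ∀ a : C, ∑ b, ∑' k : ℕ, p a * q b * (S a b ^ (k + 1) / (k + 1))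
      = ∑' k : ℕ, ∑ b, p a * q b * (S a b ^ (k + 1) / (k + 1)) :=
    fun a => (Summable.tsum_finsetSum fun b _ => Summable.mul_left _ (hsumm _ (h0 a b) (h1 a b))).symm
  simp_rw [step1]
  exact (Summable.tsum_finsetSum fun a _ => summable_sum fun b _ =>
    Summable.mul_left _ (hsumm _ (h0 a b) (h1 a b))).symm


lemma sum_div_aux {C D : Type*} [Fintype C] [Fintype D] (p : C → ℝ) (q : D → ℝ)
    {S : C → D → ℝ} {n : ℕ} {c : ℝ} :
    ∑ a, ∑ b, p a * q b * (S a b ^ n / c)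
      = (∑ a, ∑ b, p a * q b * S a b ^ n) / c := by
  rw [Finset.sum_div]
  refine Finset.sum_congr rfl fun a _ => ?_
  rw [Finset.sum_div]
  exact Finset.sum_congr rfl fun b _ => by ring

/-- The key correlation inequality for the interpolation method:
`E log(1 - E_ω X₁X₂) + E log(1 - E_ω Y₁Y₂) ≤ 2 E log(1 - E_ω XY)`. -/
theorem stmt3 {Ω A B : Type*} [Fintype Ω] [Fintype A] [Fintype B]
    (μ : Ω → ℝ) (hμ0 : ∀ ω, 0 ≤ μ ω) (hμ1 : ∑ ω, μ ω = 1)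
    (pX : A → ℝ) (hpX0 : ∀ a, 0 ≤ pX a) (hpX1 : ∑ a, pX a = 1)
    (pY : B → ℝ) (hpY0 : ∀ b, 0 ≤ pY b) (hpY1 : ∑ b, pY b = 1)
    (X : A → Ω → ℝ) (hX : ∀ a ω, X a ω ∈ Set.Icc (0:ℝ) 1)
    (Y : B → Ω → ℝ) (hY : ∀ b ω, Y b ω ∈ Set.Icc (0:ℝ) 1)
    (hXX : ∀ a b, ∑ ω, μ ω * (X a ω * X b ω) < 1)
    (hYY : ∀ a b, ∑ ω, μ ω * (Y a ω * Y b ω) < 1)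
    (hXY : ∀ a b, ∑ ω, μ ω * (X a ω * Y b ω) < 1) :
    (∑ a, ∑ b, pX a * pX b * Real.log (1 - ∑ ω, μ ω * (X a ω * X b ω)))
      + (∑ a, ∑ b, pY a * pY b * Real.log (1 - ∑ ω, μ ω * (Y a ω * Y b ω)))
      ≤ 2 * ∑ a, ∑ b, pX a * pY b * Real.log (1 - ∑ ω, μ ω * (X a ω * Y b ω)) := by
  have hlog : ∀ S : ℝ, 0 ≤ S → S < 1 →
      Real.log (1 - S) = -∑' k : ℕ, S ^ (k + 1) / (k + 1) := by
    intro S h0 h1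
    have := (Real.hasSum_pow_div_log_of_abs_lt_one
      (by rwa [abs_of_nonneg h0] : |S| < 1)).tsum_eq
    linarith [this]
  have hsumm : ∀ S : ℝ, 0 ≤ S → S < 1 →
      Summable (fun k : ℕ => S ^ (k + 1) / (k + 1)) :=
    fun S h0 h1 => (Real.hasSum_pow_div_log_of_abs_lt_one
      (by rwa [abs_of_nonneg h0] : |S| < 1)).summable
  have hxx0 : ∀ a b, (0:ℝ) ≤ ∑ ω, μ ω * (X a ω * X b ω) := fun a b =>
    Finset.sum_nonneg fun ω _ => mul_nonneg (hμ0 ω) (mul_nonneg (hX a ω).1 (hX b ω).1)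
  have hyy0 : ∀ a b, (0:ℝ) ≤ ∑ ω, μ ω * (Y a ω * Y b ω) := fun a b =>
    Finset.sum_nonneg fun ω _ => mul_nonneg (hμ0 ω) (mul_nonneg (hY a ω).1 (hY b ω).1)
  have hxy0 : ∀ a b, (0:ℝ) ≤ ∑ ω, μ ω * (X a ω * Y b ω) := fun a b =>
    Finset.sum_nonneg fun ω _ => mul_nonneg (hμ0 ω) (mul_nonneg (hX a ω).1 (hY b ω).1)
  have E1 : (∑ a, ∑ b, pX a * pX b * Real.log (1 - ∑ ω, μ ω * (X a ω * X b ω)))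
      = -∑' k : ℕ, ∑ a, ∑ b, pX a * pX b *
          ((∑ ω, μ ω * (X a ω * X b ω)) ^ (k + 1) / ((k : ℝ) + 1)) :=
    log_expand pX pX _ hxx0 hXX
  have E2 : (∑ a, ∑ b, pY a * pY b * Real.log (1 - ∑ ω, μ ω * (Y a ω * Y b ω)))
      = -∑' k : ℕ, ∑ a, ∑ b, pY a * pY b *
          ((∑ ω, μ ω * (Y a ω * Y b ω)) ^ (k + 1) / ((k : ℝ) + 1)) :=
    log_expand pY pY _ hyy0 hYY
  have E3 : (∑ a, ∑ b, pX a * pY b * Real.log (1 - ∑ ω, μ ω * (X a ω * Y b ω)))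
      = -∑' k : ℕ, ∑ a, ∑ b, pX a * pY b *
          ((∑ ω, μ ω * (X a ω * Y b ω)) ^ (k + 1) / ((k : ℝ) + 1)) :=
    log_expand pX pY _ hxy0 hXY
  rw [E1, E2, E3]
  -- reduce to comparing the tsums
  rw [← neg_add, mul_neg, neg_le_neg_iff, ← Summable.tsum_add
    (summable_sum fun a _ => summable_sum fun b _ => Summable.mul_left _ (hsumm _ (hxx0 a b) (hXX a b)))
    (summable_sum fun a _ => summable_sum fun b _ => Summable.mul_left _ (hsumm _ (hyy0 a b) (hYY a b))),
    ← tsum_mul_left]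
  refine Summable.tsum_le_tsum (fun k => ?_)
    (((summable_sum fun a _ => summable_sum fun b _ =>
        Summable.mul_left _ (hsumm _ (hxy0 a b) (hXY a b)))).mul_left 2)
    (((summable_sum fun a _ => summable_sum fun b _ =>
        Summable.mul_left _ (hsumm _ (hxx0 a b) (hXX a b)))).add
      ((summable_sum fun a _ => summable_sum fun b _ =>
        Summable.mul_left _ (hsumm _ (hyy0 a b) (hYY a b)))))
  -- termwise inequality
  push_cast
  rw [sum_div_aux pX pX, sum_div_aux pY pY, sum_div_aux pX pY]
  rw [key_moment μ pX pX X X (k + 1), key_moment μ pY pY Y Y (k + 1),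
    key_moment μ pX pY X Y (k + 1)]
  have hk : (0:ℝ) < (k:ℝ) + 1 := by positivity
  rw [← mul_div_assoc, ← add_div, div_le_div_iff_of_pos_right hk]
  have hkey : ∀ w : Fin (k + 1) → Ω,
      (∏ i, μ (w i)) * ((∑ a, pX a * ∏ i, X a (w i)) * (∑ b, pY b * ∏ i, Y b (w i))) * 2
        ≤ (∏ i, μ (w i)) * ((∑ a, pX a * ∏ i, X a (w i)) * (∑ b, pX b * ∏ i, X b (w i)))
          + (∏ i, μ (w i)) * ((∑ a, pY a * ∏ i, Y a (w i)) * (∑ b, pY b * ∏ i, Y b (w i))) := by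
    intro w
    have hμw : 0 ≤ ∏ i, μ (w i) := Finset.prod_nonneg fun i _ => hμ0 (w i)
    nlinarith [mul_nonneg hμw (sq_nonneg ((∑ a, pX a * ∏ i, X a (w i)) -
      (∑ b, pY b * ∏ i, Y b (w i))))]
  calc 2 * ∑ w : Fin (k+1) → Ω, (∏ i, μ (w i)) *
        ((∑ a, pX a * ∏ i, X a (w i)) * (∑ b, pY b * ∏ i, Y b (w i)))
      = ∑ w : Fin (k+1) → Ω, (∏ i, μ (w i)) *
        ((∑ a, pX a * ∏ i, X a (w i)) * (∑ b, pY b * ∏ i, Y b (w i))) * 2 := by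
        rw [Finset.mul_sum]
        exact Finset.sum_congr rfl fun w _ => by ring
    _ ≤ ∑ w : Fin (k+1) → Ω, ((∏ i, μ (w i)) *
        ((∑ a, pX a * ∏ i, X a (w i)) * (∑ b, pX b * ∏ i, X b (w i)))
          + (∏ i, μ (w i)) * ((∑ a, pY a * ∏ i, Y a (w i)) * (∑ b, pY b * ∏ i, Y b (w i)))) := by
        exact Finset.sum_le_sum fun w _ => hkey w
    _ = _ := Finset.sum_add_distrib
end

section
/- Let Ω be a finite sample space with a random element ω, let X and Y be random [0,1]-valued functions on Ω with independent copies X₁, X₂ and Y₁, Y₂ respectively. Then for every positive integer ℓ: E_{X₁,X₂}(E_ω X₁(ω)X₂(ω))^ℓ + E_{Y₁,Y₂}(E_ω Y₁(ω)Y₂(ω))^ℓ − 2 E_{X,Y}(E_ω X(ω)Y(ω))^ℓ ≥ 0. -/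
open Finset

lemma pow_sum_expand {Ω : Type*} [Fintype Ω] (f : Ω → ℝ) (ℓ : ℕ) :
    (∑ ω, f ω) ^ ℓ = ∑ w ∈ Fintype.piFinset (fun _ : Fin ℓ => (univ : Finset Ω)),
      ∏ i, f (w i) := by
  rw [← Finset.prod_univ_sum]
  simp

lemma swap3 {α β γ : Type*} (s : Finset α) (t : Finset β) (u : Finset γ)
    (f : α → β → γ → ℝ) :
    ∑ a ∈ s, ∑ b ∈ t, ∑ c ∈ u, f a b c = ∑ c ∈ u, ∑ a ∈ s, ∑ b ∈ t, f a b c := by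
  calc ∑ a ∈ s, ∑ b ∈ t, ∑ c ∈ u, f a b c
      = ∑ a ∈ s, ∑ c ∈ u, ∑ b ∈ t, f a b c :=
        Finset.sum_congr rfl fun a _ => Finset.sum_comm
    _ = ∑ c ∈ u, ∑ a ∈ s, ∑ b ∈ t, f a b c := Finset.sum_comm

/-- Moment inequality: for every positive integer `ℓ`,
`E (E_ω X₁X₂)^ℓ + E (E_ω Y₁Y₂)^ℓ - 2 E (E_ω XY)^ℓ ≥ 0`. -/
theorem stmt4 {Ω A B : Type*} [Fintype Ω] [Fintype A] [Fintype B]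
    (μ : Ω → ℝ) (hμ0 : ∀ ω, 0 ≤ μ ω) (hμ1 : ∑ ω, μ ω = 1)
    (pX : A → ℝ) (hpX0 : ∀ a, 0 ≤ pX a) (hpX1 : ∑ a, pX a = 1)
    (pY : B → ℝ) (hpY0 : ∀ b, 0 ≤ pY b) (hpY1 : ∑ b, pY b = 1)
    (X : A → Ω → ℝ) (hX : ∀ a ω, X a ω ∈ Set.Icc (0:ℝ) 1)
    (Y : B → Ω → ℝ) (hY : ∀ b ω, Y b ω ∈ Set.Icc (0:ℝ) 1)
    (ℓ : ℕ) (hℓ : 1 ≤ ℓ) :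
    0 ≤ (∑ a, ∑ b, pX a * pX b * (∑ ω, μ ω * (X a ω * X b ω)) ^ ℓ)
      + (∑ a, ∑ b, pY a * pY b * (∑ ω, μ ω * (Y a ω * Y b ω)) ^ ℓ)
      - 2 * ∑ a, ∑ b, pX a * pY b * (∑ ω, μ ω * (X a ω * Y b ω)) ^ ℓ := by
  classical
  set W := Fintype.piFinset (fun _ : Fin ℓ => (univ : Finset Ω)) with hW
  set M : (Fin ℓ → Ω) → ℝ := fun w => ∏ i, μ (w i) with hM
  set F : (Fin ℓ → Ω) → ℝ := fun w => ∑ a, pX a * ∏ i, X a (w i) with hF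
  set G : (Fin ℓ → Ω) → ℝ := fun w => ∑ b, pY b * ∏ i, Y b (w i) with hG
  have key : ∀ (u v : Ω → ℝ),
      (∑ ω, μ ω * (u ω * v ω)) ^ ℓ
        = ∑ w ∈ W, M w * ((∏ i, u (w i)) * (∏ i, v (w i))) := by
    intro u v
    rw [pow_sum_expand]
    refine Finset.sum_congr rfl fun w _ => ?_
    simp [hM, Finset.prod_mul_distrib]
  have eXX : (∑ a, ∑ b, pX a * pX b * (∑ ω, μ ω * (X a ω * X b ω)) ^ ℓ)
      = ∑ w ∈ W, M w * (F w * F w) := by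
    simp_rw [key, Finset.mul_sum]
    rw [swap3]
    refine Finset.sum_congr rfl fun w _ => ?_
    rw [hF]
    simp_rw [Finset.sum_mul, Finset.mul_sum]
    refine Finset.sum_congr rfl fun a _ => Finset.sum_congr rfl fun b _ => ?_
    ring
  have eYY : (∑ a, ∑ b, pY a * pY b * (∑ ω, μ ω * (Y a ω * Y b ω)) ^ ℓ)
      = ∑ w ∈ W, M w * (G w * G w) := by
    simp_rw [key, Finset.mul_sum]
    rw [swap3]
    refine Finset.sum_congr rfl fun w _ => ?_
    rw [hG]
    simp_rw [Finset.sum_mul, Finset.mul_sum]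
    refine Finset.sum_congr rfl fun a _ => Finset.sum_congr rfl fun b _ => ?_
    ring
  have eXY : (∑ a, ∑ b, pX a * pY b * (∑ ω, μ ω * (X a ω * Y b ω)) ^ ℓ)
      = ∑ w ∈ W, M w * (F w * G w) := by
    simp_rw [key, Finset.mul_sum]
    rw [swap3]
    refine Finset.sum_congr rfl fun w _ => ?_
    rw [hF, hG]
    simp_rw [Finset.sum_mul, Finset.mul_sum]
    refine Finset.sum_congr rfl fun a _ => Finset.sum_congr rfl fun b _ => ?_
    ring
  rw [eXX, eYY, eXY]
  have : (∑ w ∈ W, M w * (F w * F w)) + (∑ w ∈ W, M w * (G w * G w))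
      - 2 * ∑ w ∈ W, M w * (F w * G w) = ∑ w ∈ W, M w * (F w - G w) ^ 2 := by
    rw [Finset.mul_sum, ← Finset.sum_add_distrib, ← Finset.sum_sub_distrib]
    refine Finset.sum_congr rfl fun w _ => ?_
    ring
  rw [this]
  exact Finset.sum_nonneg fun w _ => mul_nonneg
    (Finset.prod_nonneg fun i _ => hμ0 _) (sq_nonneg _)
end
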